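/- arXiv:1303.5139 — 6 statements merged into one kernel-verified Lean document; each statement's English description precedes it below -/
import Mathlib

section
/- Let d : ℕ → ℝ be a function with d(k) ≥ k + (1/2)√(k log k) for all k ≥ 3 and d(k)/k → 1 as k → ∞, and for each k ≥ 3 let μ(k) be the unique positive root of μ f_{k−1}(μ) = d(k) f_k(μ). Then for all sufficiently large k one has k ≤ μ(k) ≤ d(k), and consequently μ(k)/d(k) → 1 as k → ∞. -/
open Filter

/-- `fpois j μ = ∑_{i ≥ j} e^{−μ} μ^i / i!`, the probability that a Poisson(μ)
random variable is at least `j`. -/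
noncomputable def fpois (j : ℕ) (μ : ℝ) : ℝ :=
  ∑' i : ℕ, if j ≤ i then Real.exp (-μ) * μ ^ i / (Nat.factorial i) else 0

lemma summable_pterm (μ : ℝ) :
    Summable (fun i : ℕ => Real.exp (-μ) * μ ^ i / (Nat.factorial i)) := by
  have h := (Real.summable_pow_div_factorial μ).mul_left (Real.exp (-μ))
  simpa [mul_div_assoc] using h

lemma summable_fterm (j : ℕ) (μ : ℝ) :
    Summable (fun i : ℕ => if j ≤ i then Real.exp (-μ) * μ ^ i / (Nat.factorial i) else 0) := by
  have h := (summable_pterm μ).indicator {i | j ≤ i}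
  refine h.congr fun i => ?_
  by_cases hi : j ≤ i <;> simp [Set.indicator, hi]

lemma pterm_nonneg {μ : ℝ} (hμ : 0 ≤ μ) (j i : ℕ) :
    0 ≤ (if j ≤ i then Real.exp (-μ) * μ ^ i / (Nat.factorial i) else 0) := by
  split
  · positivity
  · exact le_refl 0

lemma fpois_pos (j : ℕ) {μ : ℝ} (hμ : 0 < μ) : 0 < fpois j μ := by
  refine Summable.tsum_pos (summable_fterm j μ) (pterm_nonneg hμ.le j) j ?_
  simp only [le_refl, if_true]
  positivity

lemma fpois_split (k : ℕ) (hk : 1 ≤ k) (μ : ℝ) :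
    fpois (k-1) μ = Real.exp (-μ) * μ ^ (k-1) / (Nat.factorial (k-1)) + fpois k μ := by
  unfold fpois
  have hfe : ∀ i : ℕ, (if k-1 ≤ i then Real.exp (-μ) * μ ^ i / (Nat.factorial i) else 0)
      = (if i = k-1 then Real.exp (-μ) * μ ^ (k-1) / (Nat.factorial (k-1)) else 0)
        + (if k ≤ i then Real.exp (-μ) * μ ^ i / (Nat.factorial i) else 0) := by
    intro i
    by_cases h1 : k ≤ i
    · have h2 : k - 1 ≤ i := by omega
      have h3 : ¬ (i = k - 1) := by omega
      simp [h1, h2, h3]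
    · by_cases h2 : i = k - 1
      · subst h2
        simp [h1, le_refl]
      · have h3 : ¬ (k - 1 ≤ i) := by omega
        simp [h1, h2, h3]
  rw [tsum_congr hfe,
    Summable.tsum_add ⟨_, hasSum_ite_eq (k-1) (Real.exp (-μ) * μ ^ (k-1) / (Nat.factorial (k-1)))⟩
      (summable_fterm k μ), tsum_ite_eq]


lemma factorial_le (k M : ℕ) : ∀ j ≤ M, Nat.factorial (k+j) ≤ Nat.factorial k * (k+M)^j := by
  intro j
  induction j with
  | zero => simp
  | succ n ih =>
    intro hn
    have h1 := ih (by omega)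
    have h2 : k + (n+1) ≤ k + M := by omega
    calc Nat.factorial (k+(n+1)) = (k+n+1) * Nat.factorial (k+n) := by
          rw [show k+(n+1) = (k+n)+1 by omega, Nat.factorial_succ]
      _ ≤ (k+M) * (Nat.factorial k * (k+M)^n) := by
          exact Nat.mul_le_mul (by omega) h1
      _ = Nat.factorial k * (k+M)^(n+1) := by ring

lemma fpois_partial_le (k M : ℕ) {μ : ℝ} (hμ : 0 ≤ μ) :
    ∑ j ∈ Finset.range (M+1), Real.exp (-μ) * μ^(k+j) / (Nat.factorial (k+j)) ≤ fpois k μ := by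
  have h := Summable.sum_le_tsum (Finset.image (fun j => k + j) (Finset.range (M+1)))
    (fun i _ => pterm_nonneg hμ k i) (summable_fterm k μ)
  rw [Finset.sum_image (by intro a _ b _ h; simp only at h; omega)] at h
  refine le_trans (le_of_eq ?_) h
  refine Finset.sum_congr rfl fun j _ => ?_
  simp [Nat.le_add_right]

lemma geom_lower (k Mn : ℕ) {μ : ℝ} (hμ : 0 ≤ μ) :
    Real.exp (-μ) * μ^k / (Nat.factorial k) * (∑ j ∈ Finset.range (Mn+1), (μ / (k + Mn))^j)
      ≤ fpois k μ := by
  refine le_trans ?_ (fpois_partial_le k Mn hμ)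
  rw [Finset.mul_sum]
  refine Finset.sum_le_sum fun j hj => ?_
  have hjM : j ≤ Mn := by simpa [Nat.lt_succ_iff] using hj
  have hfact := factorial_le k Mn j hjM
  have hkM : (0:ℝ) < (k:ℝ) + Mn + 1 := by positivity
  have hdivpow : (μ / ((k:ℝ) + Mn))^j = μ^j / ((k:ℝ)+Mn)^j := div_pow _ _ _
  rw [hdivpow]
  rw [div_mul_div_comm,
    show Real.exp (-μ) * μ ^ k * μ ^ j = Real.exp (-μ) * μ^(k+j) by rw [mul_assoc, ← pow_add]]
  -- goal: exp(-μ) * μ^(k+j) / (k! * (k+Mn)^j) ≤ exp(-μ) * μ^(k+j) / (k+j)!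
  apply div_le_div_of_nonneg_left
  · positivity
  · positivity
  · calc ((Nat.factorial (k+j) : ℝ)) ≤ (Nat.factorial k * (k+Mn)^j : ℕ) := by exact_mod_cast hfact
      _ = (Nat.factorial k : ℝ) * ((k:ℝ)+Mn)^j := by push_cast; ring


lemma texp_le {t c : ℝ} (hc : 0 < c) : t * Real.exp (-(c*t)) ≤ 1/c := by
  rw [Real.exp_neg, ← div_eq_mul_inv, div_le_div_iff₀ (Real.exp_pos _) hc]
  nlinarith [Real.add_one_le_exp (c*t), Real.exp_pos (c*t)]

lemma exp3_ge : (16:ℝ) ≤ Real.exp 3 := by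
  rw [show (3:ℝ) = 1+1+1 by norm_num, Real.exp_add, Real.exp_add]
  nlinarith [Real.exp_one_gt_d9]

set_option maxHeartbeats 2000000 in
lemma analytic_key {K t s M ρ : ℝ}
    (hs : s = Real.sqrt (K * Real.log K) / 2)
    (hK3 : 3 ≤ K)
    (hlogK : 96 ≤ Real.log K)
    (ht0 : 0 < t) (htK : t ≤ K)
    (hM1 : s/2 ≤ M) (hM2 : M ≤ s/2 + 1)
    (hρ0 : 0 ≤ ρ)
    (hρ : ρ ≤ Real.exp (-((M+1) * (t+M) / (K+M)))) :
    K * (t+M) < (s+t) * (1-ρ) * (K+M) := by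
  have hK0 : (0:ℝ) < K := by linarith
  have hx0 : (0:ℝ) ≤ K * Real.log K := by nlinarith
  have hs2 : s^2 = K * Real.log K / 4 := by
    rw [hs, div_pow, Real.sq_sqrt hx0]; norm_num
  have hs8 : 8 ≤ s := by
    rw [hs]
    have : (16:ℝ) ≤ Real.sqrt (K * Real.log K) := by
      rw [show (16:ℝ) = Real.sqrt 256 by
        rw [show (256:ℝ) = 16^2 by norm_num, Real.sqrt_sq]; norm_num]
      apply Real.sqrt_le_sqrt; nlinarith
    linarith
  have hs0 : 0 < s := by linarith
  have hsK : s ≤ K := by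
    have hlK : Real.log K ≤ K - 1 := Real.log_le_sub_one_of_pos hK0
    nlinarith [hs2, sq_nonneg (s - K)]
  have hM4 : 4 ≤ M := by linarith
  have hMK : M ≤ K := by linarith
  have hKM2 : K + M ≤ 2*K := by linarith
  have hKM0 : (0:ℝ) < K + M := by linarith
  -- exponent split
  have hsplit : M*t/(2*K) + M*M/(2*K) ≤ (M+1) * (t+M) / (K+M) := by
    rw [← add_div, div_le_div_iff₀ (by positivity) hKM0]
    have hM0 : (0:ℝ) ≤ M := by linarith
    nlinarith [mul_nonneg (mul_nonneg hM0 (by linarith : (0:ℝ) ≤ t+M)) (by linarith : (0:ℝ) ≤ 2*K-(K+M)),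
      mul_nonneg (by linarith : (0:ℝ) ≤ t+M) (by linarith : (0:ℝ) ≤ 2*K)]
  have hρ2 : ρ ≤ Real.exp (-(M*t/(2*K))) * Real.exp (-(M*M/(2*K))) := by
    rw [← Real.exp_add]
    refine hρ.trans (Real.exp_le_exp.mpr ?_)
    linarith
  have htexp : t * Real.exp (-(M*t/(2*K))) ≤ 2*K/M := by
    have hc : (0:ℝ) < M/(2*K) := by positivity
    have := texp_le (t := t) hc
    rw [show M/(2*K)*t = M*t/(2*K) by ring] at this
    rw [show 2*K/M = 1/(M/(2*K)) by field_simp]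
    exact this
  have h2KM : 2*K/M ≤ s := by
    rw [div_le_iff₀ (by linarith : (0:ℝ) < M)]
    nlinarith [mul_le_mul_of_nonneg_left hM1 hs0.le]
  have hexpt1 : Real.exp (-(M*t/(2*K))) ≤ 1 := by
    rw [Real.exp_le_one_iff]
    have : 0 ≤ M*t/(2*K) := by positivity
    linarith
  have hexp16 : Real.exp (-(M*M/(2*K))) ≤ 1/16 := by
    have h3 : (3:ℝ) ≤ M*M/(2*K) := by
      rw [le_div_iff₀ (by positivity)]
      nlinarith [hs2]
    calc Real.exp (-(M*M/(2*K))) ≤ Real.exp (-3) := Real.exp_le_exp.mpr (by linarith)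
      _ ≤ 1/16 := by
          rw [Real.exp_neg, inv_eq_one_div, div_le_div_iff₀ (Real.exp_pos 3) (by norm_num)]
          linarith [exp3_ge]
  have hE : ρ * (s+t) ≤ 1/16 * (s + 2*K/M) := by
    calc ρ * (s+t) ≤ (Real.exp (-(M*t/(2*K))) * Real.exp (-(M*M/(2*K)))) * (s+t) := by
          apply mul_le_mul_of_nonneg_right hρ2 (by linarith)
      _ = Real.exp (-(M*M/(2*K))) * (s * Real.exp (-(M*t/(2*K))) + t * Real.exp (-(M*t/(2*K)))) := by
          ring
      _ ≤ 1/16 * (s + 2*K/M) := by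
          apply mul_le_mul hexp16 _ _ (by norm_num)
          · exact add_le_add (by nlinarith [Real.exp_pos (-(M*t/(2*K)))]) htexp
          · positivity
  have hE2 : ρ * (s+t) * (K+M) ≤ K * s / 4 := by
    calc ρ * (s+t) * (K+M) ≤ (1/16 * (s+s)) * (2*K) := by
          apply mul_le_mul (hE.trans (by linarith)) hKM2 (by positivity) (by positivity)
      _ = K * s / 4 := by ring
  have hKM' : K * M ≤ K * (s/2+1) := mul_le_mul_of_nonneg_left hM2 hK0.le
  have hKs : 8 * K ≤ K * s := by
    have := mul_le_mul_of_nonneg_left hs8 hK0.le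
    linarith
  have hM0' : (0:ℝ) ≤ M := by linarith
  have hgoal : K*(t+M) < (s+t)*(K+M) - K*s/4 := by
    have e : (s+t)*(K+M) = s*K + s*M + t*K + t*M := by ring
    have e2 : K*(t+M) = K*t + K*M := by ring
    rw [e, e2]
    have p1 : 0 ≤ s*M := mul_nonneg hs0.le hM0'
    have p2 : 0 ≤ t*M := mul_nonneg ht0.le hM0'
    have e3 : s*K = K*s := by ring
    have e4 : t*K = K*t := by ring
    linarith [hKM', hKs, p1, p2, e3, e4]
  have h1 : (s+t)*(1-ρ)*(K+M) = (s+t)*(K+M) - ρ*(s+t)*(K+M) := by ring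
  linarith [hgoal, hE2, h1]

lemma cancel_aux {a G P c0 K : ℝ} (hP : 0 < P) (hc0 : 0 < c0) (hK : 0 < K)
    (h : a * (P / (K * c0) * G) ≤ P / c0) : a * G ≤ K := by
  have h1 : P * (a*G) ≤ P * K := by
    have e : a * (P/(K*c0) * G) = (P * (a*G)) / (K*c0) := by ring
    rw [e, div_le_iff₀ (by positivity)] at h
    calc P*(a*G) ≤ P/c0 * (K*c0) := h
      _ = P*K := by field_simp
  exact le_of_mul_le_mul_left h1 hP

set_option maxHeartbeats 1000000 in
theorem stmt6 (d : ℕ → ℝ)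
    (hd : ∀ k : ℕ, 3 ≤ k → (k : ℝ) + (1/2) * Real.sqrt (k * Real.log k) ≤ d k)
    (hlim : Tendsto (fun k : ℕ => d k / k) atTop (nhds 1))
    (mu : ℕ → ℝ)
    (hmu : ∀ k : ℕ, 3 ≤ k → 0 < mu k ∧
      mu k * fpois (k - 1) (mu k) = d k * fpois k (mu k)) :
    (∀ᶠ k : ℕ in atTop, (k : ℝ) ≤ mu k ∧ mu k ≤ d k) ∧
    Tendsto (fun k : ℕ => mu k / d k) atTop (nhds 1) := by
  have hlogev : ∀ᶠ k : ℕ in atTop, (96:ℝ) ≤ Real.log k :=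
    (Real.tendsto_log_atTop.comp tendsto_natCast_atTop_atTop).eventually_ge_atTop 96
  have hev : ∀ᶠ k : ℕ in atTop, (k : ℝ) ≤ mu k ∧ mu k ≤ d k := by
    filter_upwards [hlogev, eventually_ge_atTop 3] with k hlogk hk3
    set K : ℝ := (k : ℝ) with hKdef
    set μ : ℝ := mu k with hμdef
    obtain ⟨hμ0, heq⟩ := hmu k hk3
    have hK3 : (3:ℝ) ≤ K := by rw [hKdef]; exact_mod_cast hk3
    have hK0 : (0:ℝ) < K := by linarith
    have hkpos : 0 < k := by omega
    have hfk : 0 < fpois k μ := fpois_pos k hμ0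
    have hk1 : k - 1 + 1 = k := by omega
    have hEQ : (d k - μ) * fpois k μ
        = Real.exp (-μ) * μ^k / (Nat.factorial (k-1)) := by
      have h1 : μ * (Real.exp (-μ) * μ^(k-1) / (Nat.factorial (k-1)) + fpois k μ)
          = d k * fpois k μ := by
        rw [← fpois_split k (by omega) μ]; exact heq
      have hpow : μ^k = μ * μ^(k-1) := by
        conv_lhs => rw [← hk1, pow_succ]
        ring
      rw [hpow]; linear_combination -h1
    have hfacpos : ∀ m : ℕ, (0:ℝ) < (Nat.factorial m : ℝ) :=
      fun m => by exact_mod_cast Nat.factorial_pos m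
    have hR : 0 < Real.exp (-μ) * μ^k / (Nat.factorial (k-1)) :=
      div_pos (mul_pos (Real.exp_pos _) (pow_pos hμ0 k)) (hfacpos _)
    have hdm : 0 < d k - μ := by
      by_contra hcon
      push_neg at hcon
      nlinarith [hEQ, hfk, hR]
    refine ⟨?_, by linarith⟩
    -- lower bound
    by_contra hlt
    push_neg at hlt
    set s : ℝ := Real.sqrt (K * Real.log K) / 2 with hsdef
    set t : ℝ := K - μ with htdef
    have hlogK : (96:ℝ) ≤ Real.log K := hlogk
    have hs0 : 0 < s := by
      have h : (0:ℝ) < K * Real.log K := by nlinarith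
      rw [hsdef]
      have := Real.sqrt_pos.mpr h
      linarith
    set Mn : ℕ := ⌈s/2⌉₊ with hMndef
    set M : ℝ := (Mn : ℝ) with hMdef
    have hM1 : s/2 ≤ M := Nat.le_ceil _
    have hM2 : M ≤ s/2 + 1 := le_of_lt (Nat.ceil_lt_add_one (by linarith : (0:ℝ) ≤ s/2))
    have hM0 : (0:ℝ) ≤ M := by rw [hMdef]; exact Nat.cast_nonneg _
    have hKM0 : (0:ℝ) < K + M := by linarith
    set r : ℝ := μ / (K + M) with hrdef
    have hr0 : 0 ≤ r := by rw [hrdef]; exact div_nonneg hμ0.le hKM0.le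
    have hr1 : r < 1 := by
      rw [hrdef, div_lt_one hKM0]; linarith
    set G : ℝ := ∑ j ∈ Finset.range (Mn+1), r^j with hGdef
    have hG0 : 0 ≤ G := Finset.sum_nonneg fun j _ => pow_nonneg hr0 j
    have hGf : Real.exp (-μ) * μ^k / (Nat.factorial k) * G ≤ fpois k μ := by
      have := geom_lower k Mn (le_of_lt hμ0)
      rw [hGdef, hrdef]
      exact this
    have ht0 : 0 < t := by rw [htdef]; linarith
    have h4 : s + t ≤ d k - μ := by
      have := hd k hk3
      rw [htdef, hsdef, hKdef]
      linarith
    have h6 : (s+t) * (Real.exp (-μ) * μ^k / (Nat.factorial k) * G)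
        ≤ Real.exp (-μ) * μ^k / (Nat.factorial (k-1)) := by
      calc (s+t) * (Real.exp (-μ) * μ^k / (Nat.factorial k) * G)
          ≤ (d k - μ) * fpois k μ := by
            exact mul_le_mul h4 hGf
              (mul_nonneg (div_nonneg (mul_nonneg (Real.exp_nonneg _) (pow_nonneg hμ0.le k))
                (hfacpos _).le) hG0) (le_of_lt hdm)
        _ = _ := hEQ
    have hfac : ((Nat.factorial k : ℝ)) = K * (Nat.factorial (k-1)) := by
      rw [hKdef]
      exact_mod_cast (Nat.mul_factorial_pred hkpos.ne').symm
    rw [hfac] at h6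
    have h7 : (s+t) * G ≤ K :=
      cancel_aux (mul_pos (Real.exp_pos _) (pow_pos hμ0 k)) (hfacpos (k-1)) hK0 h6
    set ρ : ℝ := r^(Mn+1) with hρdef
    have hρ0 : 0 ≤ ρ := pow_nonneg hr0 _
    have h1r : 1 - r = (t+M)/(K+M) := by
      rw [hrdef, htdef]
      field_simp
      ring
    have h1rpos : 0 < 1 - r := by linarith
    have hGeq : G = (1-ρ)/(1-r) := by
      rw [hGdef, geom_sum_eq (ne_of_lt hr1), hρdef, ← neg_div_neg_eq]
      ring_nf
    have hMAIN : (s+t)*(1-ρ)*(K+M) ≤ K*(t+M) := by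
      rw [hGeq] at h7
      rw [← mul_div_assoc] at h7
      rw [div_le_iff₀ h1rpos] at h7
      rw [h1r] at h7
      rw [← le_div_iff₀ hKM0]
      rw [mul_div_assoc]
      exact h7
    have hρle : ρ ≤ Real.exp (-((M+1) * (t+M) / (K+M))) := by
      have hr_exp : r ≤ Real.exp (r - 1) := by
        linarith [Real.add_one_le_exp (r-1)]
      have h1 : ρ ≤ (Real.exp (r-1))^(Mn+1) := by
        rw [hρdef]
        exact pow_le_pow_left₀ hr0 hr_exp (Mn+1)
      rw [← Real.exp_nat_mul] at h1
      refine h1.trans (le_of_eq ?_)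
      congr 1
      have hr1eq : r - 1 = -((t+M)/(K+M)) := by linarith
      rw [hr1eq]
      push_cast
      ring
    have hkey := analytic_key hsdef hK3 hlogK ht0 (by rw [htdef]; linarith) hM1 hM2 hρ0 hρle
    linarith
  refine ⟨hev, ?_⟩
  have hdpos : ∀ᶠ k : ℕ in atTop, 0 < d k := by
    filter_upwards [eventually_ge_atTop 3] with k hk3
    have := hd k hk3
    have hK3 : (3:ℝ) ≤ (k:ℝ) := by exact_mod_cast hk3
    nlinarith [Real.sqrt_nonneg ((k:ℝ) * Real.log k)]
  have h1 : Tendsto (fun k : ℕ => (k:ℝ) / d k) atTop (nhds 1) := by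
    have h2 := hlim.inv₀ one_ne_zero
    rw [inv_one] at h2
    refine h2.congr fun k => ?_
    rw [inv_div]
  refine tendsto_of_tendsto_of_tendsto_of_le_of_le' h1 tendsto_const_nhds ?_ ?_
  · filter_upwards [hev, hdpos] with k ⟨hl, hu⟩ hp
    exact div_le_div_of_nonneg_right hl hp.le
  · filter_upwards [hev, hdpos] with k ⟨hl, hu⟩ hp
    rw [div_le_one hp]
    exact hu
end

section
/- For all positive integers k, s and every integer M_s > ks, one has ∑_{d ∈ D_{s,M_s,k}} ∏_{i=1}^s 1/(d_i − k)! ≤ ( e/(M_s/s − k) )^{M_s − ks}; moreover when M_s = ks both sides equal 1 (with the convention 0^0 = 1). -/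
open Filter

/-- `D_{s,M,k}`: degree sequences on `s` coordinates summing to `M`, each entry at least `k`. -/
def Dset (s M k : ℕ) : Set (Fin s → ℕ) :=
  {d | (∀ i, k ≤ d i) ∧ ∑ i, d i = M}

theorem stmt12 (k s : ℕ) (hk : 0 < k) (hs : 0 < s) (Ms : ℕ) (hMs : k * s ≤ Ms) :
    (k * s < Ms →
      (∑' d : ↥(Dset s Ms k), ∏ i, ((Nat.factorial (d.val i - k) : ℝ))⁻¹) ≤
        (Real.exp 1 / ((Ms : ℝ) / s - k)) ^ (Ms - k * s)) ∧
    (Ms = k * s →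
      (∑' d : ↥(Dset s Ms k), ∏ i, ((Nat.factorial (d.val i - k) : ℝ))⁻¹) = 1 ∧
      (Real.exp 1 / ((Ms : ℝ) / s - k)) ^ (Ms - k * s) = 1) := by
  classical
  set m := Ms - k * s with hm
  have hMsm : Ms = m + k * s := by omega
  -- identify Dset with a Finset
  have hinj : Function.Injective (fun (e : Fin s → ℕ) (i : Fin s) => e i + k) := by
    intro a b hab
    funext i
    have := congrFun hab i
    simpa using this
  have hDset : Dset s Ms k =
      ↑((Finset.piAntidiag (Finset.univ : Finset (Fin s)) m).image (fun (e : Fin s → ℕ) i => e i + k)) := by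
    ext d
    simp only [Dset, Set.mem_setOf_eq, Finset.coe_image, Set.mem_image, Finset.mem_coe,
      Finset.mem_piAntidiag]
    constructor
    · rintro ⟨hle, hsum⟩
      refine ⟨fun i => d i - k, ⟨?_, fun i _ => Finset.mem_univ i⟩, ?_⟩
      · have h1 : ∑ i, (d i - k) + s * k = Ms := by
          calc ∑ i, (d i - k) + s * k = ∑ i, ((d i - k) + k) := by
                rw [Finset.sum_add_distrib]
                simp [Finset.sum_const, Finset.card_univ]
            _ = ∑ i, d i := Finset.sum_congr rfl fun i _ => Nat.sub_add_cancel (hle i)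
            _ = Ms := hsum
        have h2 : s * k = k * s := mul_comm s k
        omega
      · funext i; exact Nat.sub_add_cancel (hle i)
    · rintro ⟨e, ⟨hesum, -⟩, rfl⟩
      refine ⟨fun i => by simp, ?_⟩
      rw [Finset.sum_add_distrib, hesum]
      simp [mul_comm, hMsm]
  -- the tsum equals the finite sum
  have htsum : (∑' d : ↥(Dset s Ms k), ∏ i, ((Nat.factorial (d.val i - k) : ℝ))⁻¹) =
      ∑ e ∈ Finset.piAntidiag (Finset.univ : Finset (Fin s)) m, ∏ i, ((Nat.factorial (e i) : ℝ))⁻¹ := by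
    rw [hDset]
    refine ((Finset.tsum_subtype _ fun d : Fin s → ℕ => ∏ i, ((Nat.factorial (d i - k) : ℝ))⁻¹).trans ?_)
    rw [Finset.sum_image (fun a _ b _ h => hinj h)]
    exact Finset.sum_congr rfl fun e _ => Finset.prod_congr rfl fun i _ => by simp
  -- the finite sum equals s^m / m!
  have hkey : ∑ e ∈ Finset.piAntidiag (Finset.univ : Finset (Fin s)) m, ∏ i, ((Nat.factorial (e i) : ℝ))⁻¹ =
      (s : ℝ) ^ m / (Nat.factorial m : ℝ) := by
    have hs' : ((s : ℕ) : ℝ) ^ m = ∑ e ∈ Finset.piAntidiag (Finset.univ : Finset (Fin s)) m,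
        ((Nat.multinomial Finset.univ e : ℕ) : ℝ) := by
      have := Finset.sum_pow_eq_sum_piAntidiag (Finset.univ : Finset (Fin s))
        (fun _ => (1 : ℝ)) m
      simpa using this
    rw [hs', Finset.sum_div]
    refine Finset.sum_congr rfl fun e he => ?_
    rw [Finset.mem_piAntidiag] at he
    have hspec := Nat.multinomial_spec Finset.univ e
    rw [he.1] at hspec
    have hprodpos : (0 : ℝ) < ∏ i, ((Nat.factorial (e i) : ℝ)) := by
      positivity
    have hcast : (∏ i, ((Nat.factorial (e i) : ℝ))) * (Nat.multinomial Finset.univ e : ℝ)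
        = (Nat.factorial m : ℝ) := by
      exact_mod_cast congrArg (Nat.cast : ℕ → ℝ) hspec
    rw [Finset.prod_inv_distrib]
    field_simp
    linarith [hcast]
  constructor
  · intro hlt
    have hm0 : 0 < m := by omega
    have hseq : (Ms : ℝ) / s - k = (m : ℝ) / s := by
      have hs0 : (s : ℝ) ≠ 0 := by positivity
      rw [hMsm]
      push_cast
      field_simp
      ring
    rw [htsum, hkey, hseq]
    have hm0' : (0 : ℝ) < m := by exact_mod_cast hm0
    have hs0' : (0 : ℝ) < s := by exact_mod_cast hs
    rw [div_div_eq_mul_div, div_pow]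
    rw [div_le_div_iff₀ (by positivity) (by positivity)]
    have h1 : ((m : ℝ)) ^ m / (Nat.factorial m : ℝ) ≤ Real.exp 1 ^ m := by
      rw [← Real.exp_nat_mul]
      have := Real.pow_div_factorial_le_exp (x := (m : ℝ)) (by positivity) m
      simpa [mul_comm] using this
    have hfac : (0 : ℝ) < (Nat.factorial m : ℝ) := by positivity
    calc (s : ℝ) ^ m * (m : ℝ) ^ m
        = (m : ℝ) ^ m / (Nat.factorial m : ℝ) * ((s:ℝ) ^ m * (Nat.factorial m : ℝ)) := by
          field_simp
      _ ≤ Real.exp 1 ^ m * ((s:ℝ) ^ m * (Nat.factorial m : ℝ)) := by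
          apply mul_le_mul_of_nonneg_right h1 (by positivity)
      _ = (Real.exp 1 * s) ^ m * (Nat.factorial m : ℝ) := by rw [mul_pow]; ring
  · intro heq
    have hm0 : m = 0 := by omega
    constructor
    · rw [htsum, hkey, hm0]; simp
    · rw [hm]
      have : Ms - k * s = 0 := by omega
      rw [this, pow_zero]
end

section
/- Let k ≥ 1 be an integer and for each real ρ > k let μ(ρ) denote the unique positive root of μ f_{k−1}(μ)/f_k(μ) = ρ. Then the function ρ ↦ μ(ρ)^ρ · e^{−μ(ρ)} / f_k(μ(ρ)) · ( e/(ρ−k) )^{ρ−k} is strictly increasing on the interval (k, ∞); i.e., for all k < ρ₁ < ρ₂, μ(ρ₁)^{ρ₁} e^{−μ(ρ₁)} f_k(μ(ρ₁))^{−1} (e/(ρ₁−k))^{ρ₁−k} < μ(ρ₂)^{ρ₂} e^{−μ(ρ₂)} f_k(μ(ρ₂))^{−1} (e/(ρ₂−k))^{ρ₂−k}. -/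
open Real Finset

noncomputable def Spar (k : ℕ) (t : ℝ) : ℝ := ∑ i ∈ Finset.range k, t ^ i / (Nat.factorial i)

lemma exp_eq_tsum' (t : ℝ) : Real.exp t = ∑' n : ℕ, t ^ n / (Nat.factorial n) := by
  rw [Real.exp_eq_exp_ℝ, NormedSpace.exp_eq_tsum_div]

lemma tail_eq (k : ℕ) (t : ℝ) :
    Real.exp t - Spar k t = ∑' j : ℕ, t ^ (j + k) / (Nat.factorial (j + k)) := by
  have hs := Real.summable_pow_div_factorial t
  have h := Summable.sum_add_tsum_nat_add (f := fun n => t ^ n / (Nat.factorial n)) k hs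
  rw [exp_eq_tsum', ← h, Spar]
  ring

lemma summable_tail (k : ℕ) (t : ℝ) :
    Summable (fun j : ℕ => t ^ (j + k) / (Nat.factorial (j + k))) :=
  (summable_nat_add_iff k).mpr (Real.summable_pow_div_factorial t)

lemma tail_pos (k : ℕ) {t : ℝ} (ht : 0 < t) : 0 < Real.exp t - Spar k t := by
  rw [tail_eq]
  refine Summable.tsum_pos (summable_tail k t) (fun i => by positivity) 0 (by positivity)

lemma fpois_eq (k : ℕ) (t : ℝ) (ht : 0 < t) :
    fpois k t = Real.exp (-t) * (Real.exp t - Spar k t) := by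
  have hs : Summable (fun i : ℕ => Real.exp (-t) * t ^ i / (Nat.factorial i)) := by
    simpa [mul_div_assoc] using (Real.summable_pow_div_factorial t).mul_left (Real.exp (-t))
  have hsite : Summable (fun i : ℕ => if k ≤ i then Real.exp (-t) * t ^ i / (Nat.factorial i) else 0) := by
    apply hs.of_nonneg_of_le (fun i => ?_) (fun i => ?_)
    · positivity
    · split
      · exact le_rfl
      · positivity
  rw [fpois]
  have h1 := Summable.sum_add_tsum_nat_add (f := fun i : ℕ => if k ≤ i then Real.exp (-t) * t ^ i / (Nat.factorial i) else 0) k hsite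
  have h2 : (∑ i ∈ Finset.range k, if k ≤ i then Real.exp (-t) * t ^ i / (Nat.factorial i) else 0) = 0 := by
    apply Finset.sum_eq_zero
    intro i hi
    simp [Nat.not_le.mpr (Finset.mem_range.mp hi)]
  rw [← h1, h2, zero_add]
  have h3 : ∀ j : ℕ, (if k ≤ j + k then Real.exp (-t) * t ^ (j + k) / (Nat.factorial (j + k)) else 0)
      = Real.exp (-t) * (t ^ (j + k) / (Nat.factorial (j + k))) := by
    intro j; rw [if_pos (Nat.le_add_left _ _)]; ring
  rw [tsum_congr h3, tsum_mul_left, ← tail_eq]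

noncomputable def Bf (m : ℕ) (t : ℝ) : ℝ := Real.exp t - Spar (m+1) t
noncomputable def Af (m : ℕ) (t : ℝ) : ℝ := Real.exp t - Spar m t
noncomputable def wf (m : ℕ) (t : ℝ) : ℝ := t ^ m / (Nat.factorial m)
noncomputable def rr (m : ℕ) (t : ℝ) : ℝ := t * Af m t / Bf m t
noncomputable def Ef (m : ℕ) (t : ℝ) : ℝ :=
  Bf m t ^ 2 + ((m:ℝ) + 1 - t) * wf m t * Bf m t - t * (wf m t) ^ 2

lemma Spar_succ (m : ℕ) (t : ℝ) : Spar (m+1) t = Spar m t + wf m t := by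
  rw [Spar, Spar, Finset.sum_range_succ, wf]

lemma Af_eq (m : ℕ) (t : ℝ) : Af m t = Bf m t + wf m t := by
  rw [Af, Bf, Spar_succ]; ring

lemma hasDerivAt_Spar_succ (m : ℕ) (t : ℝ) :
    HasDerivAt (fun s => Spar (m+1) s) (Spar m t) t := by
  induction m with
  | zero =>
      have : (fun s : ℝ => Spar 1 s) = fun _ => (1:ℝ) := by
        funext s; simp [Spar]
      rw [this]
      simpa [Spar] using hasDerivAt_const t (1:ℝ)
  | succ n ih =>
      have hw : HasDerivAt (fun s : ℝ => wf (n+1) s)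
          ((n+1 : ℝ) * t ^ n / (Nat.factorial (n+1))) t := by
        have := (hasDerivAt_pow (n+1) t).div_const ((Nat.factorial (n+1) : ℝ))
        simpa [wf, mul_div_assoc] using this
      have := ih.add hw
      have heq : (fun s => Spar (n+1+1) s) = fun s => Spar (n+1) s + wf (n+1) s := by
        funext s; rw [Spar_succ]
      rw [heq]
      convert! this using 1
      rw [Spar_succ, wf]
      have : ((n+1 : ℝ) * t ^ n / (Nat.factorial (n+1))) = t ^ n / (Nat.factorial n) := by
        rw [Nat.factorial_succ]
        push_cast
        rw [div_eq_div_iff (by positivity) (by positivity)]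
        ring
      rw [this]

lemma hasDerivAt_Bf (m : ℕ) (t : ℝ) : HasDerivAt (Bf m) (Af m t) t := by
  exact (Real.hasDerivAt_exp t).sub (hasDerivAt_Spar_succ m t)

lemma hasDerivAt_wf (m : ℕ) (t : ℝ) :
    HasDerivAt (wf m) ((m:ℝ) * t ^ (m-1) / (Nat.factorial m)) t := by
  exact (hasDerivAt_pow m t).div_const ((Nat.factorial m : ℝ))

lemma hasDerivAt_Af (m : ℕ) (t : ℝ) :
    HasDerivAt (Af m) (Af m t + (m:ℝ) * t ^ (m-1) / (Nat.factorial m)) t := by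
  have h : Af m = fun s => Bf m s + wf m s := by
    funext s; exact Af_eq m s
  rw [h]
  have := (hasDerivAt_Bf m t).add (hasDerivAt_wf m t)
  convert! this using 1
  rw [Af_eq]

lemma Bf_pos (m : ℕ) {t : ℝ} (ht : 0 < t) : 0 < Bf m t := tail_pos (m+1) ht
lemma Af_pos (m : ℕ) {t : ℝ} (ht : 0 < t) : 0 < Af m t := tail_pos m ht
lemma wf_pos (m : ℕ) {t : ℝ} (ht : 0 < t) : 0 < wf m t := by
  rw [wf]; positivity

lemma t_mul_dw (m : ℕ) (t : ℝ) :
    t * ((m:ℝ) * t ^ (m-1) / (Nat.factorial m)) = (m:ℝ) * wf m t := by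
  cases m with
  | zero => simp [wf]
  | succ n =>
      rw [wf]
      push_cast
      ring

lemma hasDerivAt_rr (m : ℕ) {t : ℝ} (ht : 0 < t) :
    HasDerivAt (rr m) (Ef m t / (Bf m t) ^ 2) t := by
  have hB := Bf_pos m ht
  have hu : HasDerivAt (fun s => s * Af m s)
      (1 * Af m t + t * (Af m t + (m:ℝ) * t ^ (m-1) / (Nat.factorial m))) t :=
    (hasDerivAt_id t).mul (hasDerivAt_Af m t)
  have h := hu.div (hasDerivAt_Bf m t) (ne_of_gt hB)
  have hrr : rr m = fun s => s * Af m s / Bf m s := by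
    funext s; rw [rr]
  rw [hrr]
  convert! h using 1
  have hdw := t_mul_dw m t
  rw [div_eq_div_iff (by positivity) (by positivity)]
  have expand : ((1 * Af m t + t * (Af m t + (m:ℝ) * t ^ (m-1) / (Nat.factorial m))) * Bf m t
      - t * Af m t * Af m t)
      = Af m t * Bf m t + t * Af m t * Bf m t + (t * ((m:ℝ) * t ^ (m-1) / (Nat.factorial m))) * Bf m t
        - t * Af m t * Af m t := by ring
  rw [expand, hdw, Af_eq, Ef]
  ring

lemma fact_ineq (b i j : ℕ) :
    (b+i).factorial * (b+j).factorial ≤ b.factorial * (b+i+j).factorial := by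
  induction j with
  | zero => simp [Nat.mul_comm]
  | succ n ih =>
      have h1 : (b+(n+1)).factorial = (b+n+1) * (b+n).factorial := by
        rw [← Nat.add_assoc, Nat.factorial_succ]
      have h2 : (b+i+(n+1)).factorial = (b+i+n+1) * (b+i+n).factorial := by
        rw [← Nat.add_assoc, Nat.factorial_succ]
      rw [h1, h2]
      calc (b+i).factorial * ((b+n+1) * (b+n).factorial)
          = (b+n+1) * ((b+i).factorial * (b+n).factorial) := by ring
        _ ≤ (b+n+1) * (b.factorial * (b+i+n).factorial) := Nat.mul_le_mul_left _ ih
        _ ≤ (b+i+n+1) * (b.factorial * (b+i+n).factorial) := by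
            apply Nat.mul_le_mul_right
            omega
        _ = b.factorial * ((b+i+n+1) * (b+i+n).factorial) := by ring

lemma Ef_pos (m : ℕ) {t : ℝ} (ht : 0 < t) : 0 < Ef m t := by
  set e : ℕ → ℝ := fun j => t ^ (j + (m+1)) / (Nat.factorial (j + (m+1))) with he_def
  have he : Summable e := summable_tail (m+1) t
  have hepos : ∀ j, 0 < e j := fun j => by
    simp only [he_def]; positivity
  have hBe : Bf m t = ∑' j, e j := by rw [Bf, tail_eq]
  -- t * e j = (j+m+2) * e (j+1)
  have hte : ∀ j, t * e j = ((j:ℝ) + m + 2) * e (j+1) := by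
    intro j
    simp only [he_def]
    have hfac : (Nat.factorial (j + 1 + (m+1)) : ℝ) = (j + m + 2) * Nat.factorial (j + (m+1)) := by
      have : j + 1 + (m+1) = (j + (m+1)) + 1 := by omega
      rw [this, Nat.factorial_succ]
      push_cast
      ring
    rw [hfac]
    have hpow : t ^ (j + 1 + (m+1)) = t * t ^ (j + (m+1)) := by
      rw [← pow_succ']
      congr 1
      omega
    rw [hpow]
    have h2 : (0:ℝ) < Nat.factorial (j + (m+1)) := by positivity
    field_simp
  -- product bound
  have hprod : ∀ a b : ℕ, e a * e b ≥ e 0 * e (a + b) := by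
    intro a b
    simp only [he_def]
    rw [ge_iff_le, div_mul_div_comm, div_mul_div_comm, ← pow_add, ← pow_add]
    have hpoweq : 0 + (m+1) + (a + b + (m+1)) = a + (m+1) + (b + (m+1)) := by omega
    rw [hpoweq]
    apply div_le_div_of_nonneg_left (by positivity) (by positivity)
    have := fact_ineq (m+1) a b
    have hcast : ((m+1).factorial * ((m+1)+a+b).factorial : ℕ) = (((0+(m+1)).factorial * (a+b+(m+1)).factorial : ℕ)) := by
      congr 2
      · omega
      · omega
    calc ((a+(m+1)).factorial * (b+(m+1)).factorial : ℝ)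
        = (((m+1)+a).factorial * ((m+1)+b).factorial : ℕ) := by push_cast; rw [Nat.add_comm a, Nat.add_comm b]
      _ ≤ (((m+1).factorial * ((m+1)+a+b).factorial : ℕ) : ℝ) := by exact_mod_cast fact_ineq (m+1) a b
      _ = ((0+(m+1)).factorial * (a+b+(m+1)).factorial : ℝ) := by rw [hcast]; push_cast; ring
  -- Cauchy product
  have henorm : Summable fun j => ‖e j‖ := by
    apply he.congr
    intro j
    rw [Real.norm_eq_abs, abs_of_pos (hepos j)]
  set c : ℕ → ℝ := fun n => ∑ p ∈ Finset.HasAntidiagonal.antidiagonal n, e p.1 * e p.2 with hc_def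
  have hcsum : Summable c :=
    summable_sum_mul_antidiagonal_of_summable_mul
      (Summable.mul_of_nonneg he he (fun j => (hepos j).le) (fun j => (hepos j).le))
  have hB2 : Bf m t * Bf m t = ∑' n, c n := by
    rw [hBe]
    exact tsum_mul_tsum_eq_tsum_sum_antidiagonal_of_summable_norm henorm henorm
  -- termwise bound : (m+1)*(n+1)*(e 0 * e (n+1)) < t * c n
  have hterm : ∀ n : ℕ, ((m:ℝ)+1) * ((n:ℝ)+1) * (e 0 * e (n+1)) < t * c n := by
    intro n
    have hlb : ∀ p ∈ Finset.HasAntidiagonal.antidiagonal n, ((m:ℝ)+2) * (e 0 * e (n+1)) ≤ t * (e p.1 * e p.2) := by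
      intro p hp
      have hpsum : p.1 + p.2 = n := Finset.HasAntidiagonal.mem_antidiagonal.mp hp
      have h1 : t * (e p.1 * e p.2) = ((p.2:ℝ) + m + 2) * (e p.1 * e (p.2+1)) := by
        calc t * (e p.1 * e p.2) = e p.1 * (t * e p.2) := by ring
          _ = e p.1 * (((p.2:ℝ) + m + 2) * e (p.2+1)) := by rw [hte p.2]
          _ = ((p.2:ℝ) + m + 2) * (e p.1 * e (p.2+1)) := by ring
      rw [h1]
      have h2 : e 0 * e (n+1) ≤ e p.1 * e (p.2+1) := by
        have := hprod p.1 (p.2+1)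
        have hn : p.1 + (p.2 + 1) = n + 1 := by omega
        rw [hn] at this
        exact this
      have h3 : ((m:ℝ)+2) ≤ ((p.2:ℝ) + m + 2) := by
        have : (0:ℝ) ≤ (p.2:ℝ) := Nat.cast_nonneg _
        linarith
      have h4 : (0:ℝ) ≤ e 0 * e (n+1) := by positivity
      calc ((m:ℝ)+2) * (e 0 * e (n+1)) ≤ ((p.2:ℝ) + m + 2) * (e 0 * e (n+1)) := by
            apply mul_le_mul_of_nonneg_right h3 h4
        _ ≤ ((p.2:ℝ) + m + 2) * (e p.1 * e (p.2+1)) := by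
            apply mul_le_mul_of_nonneg_left h2 (by linarith)
    have hsum : ((n:ℕ)+1) • (((m:ℝ)+2) * (e 0 * e (n+1))) ≤ ∑ p ∈ Finset.HasAntidiagonal.antidiagonal n, t * (e p.1 * e p.2) := by
      have := Finset.card_nsmul_le_sum (Finset.HasAntidiagonal.antidiagonal n)
        (fun p => t * (e p.1 * e p.2)) (((m:ℝ)+2) * (e 0 * e (n+1))) hlb
      rwa [Finset.Nat.card_antidiagonal] at this
    have htc : t * c n = ∑ p ∈ Finset.HasAntidiagonal.antidiagonal n, t * (e p.1 * e p.2) := by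
      rw [hc_def, Finset.mul_sum]
    rw [htc]
    have h5 : (0:ℝ) < e 0 * e (n+1) := by positivity
    calc ((m:ℝ)+1) * ((n:ℝ)+1) * (e 0 * e (n+1))
        < ((m:ℝ)+2) * ((n:ℝ)+1) * (e 0 * e (n+1)) := by
          have : (0:ℝ) < (n:ℝ)+1 := by positivity
          nlinarith
      _ = ((n:ℕ)+1) • (((m:ℝ)+2) * (e 0 * e (n+1))) := by
          rw [nsmul_eq_mul]
          push_cast
          ring
      _ ≤ _ := hsum
  -- assemble
  set S2 : ℕ → ℝ := fun n => ((m:ℝ)+1) * ((n:ℝ)+1) * (e 0 * e (n+1)) with hS2_def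
  have he1 : Summable (fun n => e (n+1)) := by
    have := (summable_nat_add_iff 1).mpr he
    simpa using this
  have hS2eq : S2 = fun n => ((m:ℝ)+1) * e 0 * (t * e n) - ((m:ℝ)+1) * e 0 * (((m:ℝ)+1) * e (n+1)) := by
    funext n
    rw [hS2_def]
    simp only
    rw [hte n]
    push_cast
    ring
  have hS2sum : Summable S2 := by
    rw [hS2eq]
    exact ((he.mul_left t).mul_left _).sub ((he1.mul_left _).mul_left _)
  have hshift : ∑' n, e (n+1) = Bf m t - e 0 := by
    have h0 := Summable.tsum_eq_zero_add he
    rw [hBe]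
    linarith [h0]
  have hS2val : ∑' n, S2 n = ((m:ℝ)+1) * e 0 * (t * Bf m t) - ((m:ℝ)+1) * e 0 * (((m:ℝ)+1) * (Bf m t - e 0)) := by
    rw [hS2eq]
    rw [Summable.tsum_sub ((he.mul_left t).mul_left _) ((he1.mul_left _).mul_left _)]
    congr 1
    · rw [tsum_mul_left, tsum_mul_left, hBe]
    · rw [tsum_mul_left, tsum_mul_left, hshift]
  have hS1sum : Summable (fun n => t * c n) := hcsum.mul_left t
  have hS1val : ∑' n, t * c n = t * (Bf m t * Bf m t) := by
    rw [tsum_mul_left, ← hB2]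
  have hlt : ∑' n, S2 n < ∑' n, t * c n :=
    Summable.tsum_lt_tsum (fun n => (hterm n).le) (hterm 0) hS2sum hS1sum
  have htw : t * wf m t = ((m:ℝ)+1) * e 0 := by
    rw [wf]
    simp only [he_def]
    have : (Nat.factorial (0 + (m+1)) : ℝ) = ((m:ℝ)+1) * (Nat.factorial m) := by
      rw [Nat.zero_add, Nat.factorial_succ]
      push_cast
      ring
    rw [this]
    have h1 : t ^ (0 + (m+1)) = t * t ^ m := by rw [Nat.zero_add, pow_succ']
    rw [h1]
    have h2 : (0:ℝ) < Nat.factorial m := by positivity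
    field_simp
  have hkey : t * Ef m t = (∑' n, t * c n) - ∑' n, S2 n := by
    rw [hS1val, hS2val, Ef]
    have expand : t * (Bf m t ^ 2 + ((m:ℝ) + 1 - t) * wf m t * Bf m t - t * wf m t ^ 2)
        = t * (Bf m t * Bf m t) + ((m:ℝ)+1) * (t * wf m t) * Bf m t
          - t * (t * wf m t) * Bf m t - (t * wf m t) * (t * wf m t) := by ring
    rw [expand, htw]
    ring
  have h : 0 < t * Ef m t := by rw [hkey]; linarith
  nlinarith [h, ht]

lemma t_mul_wf (m : ℕ) (t : ℝ) :
    t * wf m t = ((m:ℝ)+1) * (t ^ (m+1) / (Nat.factorial (m+1))) := by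
  rw [wf, Nat.factorial_succ]
  have h2 : (0:ℝ) < Nat.factorial m := by positivity
  push_cast
  rw [pow_succ]
  field_simp

lemma t_mul_Af (m : ℕ) (t : ℝ) :
    t * Af m t = ∑' j : ℕ, ((j:ℝ) + m + 1) * (t ^ (j + (m+1)) / (Nat.factorial (j + (m+1)))) := by
  rw [Af, tail_eq, ← tsum_mul_left]
  congr 1
  funext j
  have hfac : (Nat.factorial (j + (m+1)) : ℝ) = ((j:ℝ) + m + 1) * (Nat.factorial (j + m)) := by
    have hje : j + (m+1) = (j + m) + 1 := by omega
    rw [hje, Nat.factorial_succ]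
    push_cast
    ring
  have hpow : t ^ (j + (m+1)) = t * t ^ (j + m) := by
    rw [← pow_succ', Nat.add_assoc]
  rw [hfac, hpow]
  have h2 : (0:ℝ) < Nat.factorial (j + m) := by positivity
  have h3 : (0:ℝ) < (j:ℝ) + m + 1 := by positivity
  field_simp

lemma summable_jm (m : ℕ) (t : ℝ) :
    Summable (fun j : ℕ => ((j:ℝ) + m + 1) * (t ^ (j + (m+1)) / (Nat.factorial (j + (m+1))))) := by
  apply ((summable_tail m t).mul_left t).congr
  intro j
  have hfac : (Nat.factorial (j + (m+1)) : ℝ) = ((j:ℝ) + m + 1) * (Nat.factorial (j + m)) := by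
    have hje : j + (m+1) = (j + m) + 1 := by omega
    rw [hje, Nat.factorial_succ]
    push_cast
    ring
  have hpow : t ^ (j + (m+1)) = t * t ^ (j + m) := by
    rw [← pow_succ', Nat.add_assoc]
  rw [hfac, hpow]
  have h2 : (0:ℝ) < Nat.factorial (j + m) := by positivity
  have h3 : (0:ℝ) < (j:ℝ) + m + 1 := by positivity
  field_simp

lemma rr_gt (m : ℕ) {t : ℝ} (ht : 0 < t) : (m:ℝ) + 1 < rr m t := by
  have hB := Bf_pos m ht
  rw [rr, lt_div_iff₀ hB]
  rw [t_mul_Af]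
  have hBser : Bf m t = ∑' j : ℕ, t ^ (j + (m+1)) / (Nat.factorial (j + (m+1))) := by
    rw [Bf, tail_eq]
  rw [mul_comm ((m:ℝ)+1) (Bf m t), hBser, ← tsum_mul_right]
  apply Summable.tsum_lt_tsum (i := 1)
  · intro j
    have hterm : (0:ℝ) ≤ t ^ (j + (m+1)) / (Nat.factorial (j + (m+1))) := by positivity
    have : ((m:ℝ) + 1) ≤ ((j:ℝ) + m + 1) := by
      have : (0:ℝ) ≤ (j:ℝ) := Nat.cast_nonneg _
      linarith
    nlinarith
  · have hterm : (0:ℝ) < t ^ (1 + (m+1)) / (Nat.factorial (1 + (m+1))) := by positivity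
    nlinarith
  · exact (summable_tail (m+1) t).mul_right _
  · exact summable_jm m t

lemma e0_lt_Bf (m : ℕ) {t : ℝ} (ht : 0 < t) :
    t ^ (m+1) / (Nat.factorial (m+1)) < Bf m t := by
  have hBser : Bf m t = ∑' j : ℕ, t ^ (j + (m+1)) / (Nat.factorial (j + (m+1))) := by
    rw [Bf, tail_eq]
  have h0 := Summable.tsum_eq_zero_add (summable_tail (m+1) t)
  rw [hBser, h0]
  have htail : 0 < ∑' j : ℕ, t ^ ((j+1) + (m+1)) / (Nat.factorial ((j+1) + (m+1))) := by
    refine Summable.tsum_pos ?_ (fun i => by positivity) 0 (by positivity)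
    have := (summable_nat_add_iff (f := fun j : ℕ => t ^ (j + (m+1)) / (Nat.factorial (j + (m+1)))) 1).mpr (summable_tail (m+1) t)
    apply this.congr
    intro j
    norm_num
  simp only [Nat.zero_add]
  linarith

lemma rr_lt (m : ℕ) {t : ℝ} (ht : 0 < t) : rr m t < t + (m:ℝ) + 1 := by
  have hB := Bf_pos m ht
  rw [rr, div_lt_iff₀ hB]
  have h1 : t * Af m t = t * Bf m t + ((m:ℝ)+1) * (t ^ (m+1) / (Nat.factorial (m+1))) := by
    rw [Af_eq]
    have := t_mul_wf m t
    nlinarith [this]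
  rw [h1]
  have h2 := e0_lt_Bf m ht
  nlinarith [h2]

lemma rr_mono (m : ℕ) : StrictMonoOn (rr m) (Set.Ioi 0) := by
  apply strictMonoOn_of_deriv_pos (convex_Ioi 0)
  · intro x hx
    exact (hasDerivAt_rr m hx).continuousAt.continuousWithinAt
  · intro x hx
    rw [interior_Ioi] at hx
    rw [(hasDerivAt_rr m hx).deriv]
    have h1 := Ef_pos m hx
    have h2 := Bf_pos m hx
    positivity

noncomputable def Hf (m : ℕ) (t : ℝ) : ℝ :=
  rr m t * Real.log t - Real.log (Bf m t)
    + (rr m t - ((m:ℝ)+1)) * (1 - Real.log (rr m t - ((m:ℝ)+1)))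

lemma hasDerivAt_Hf (m : ℕ) {t : ℝ} (ht : 0 < t) :
    HasDerivAt (Hf m)
      (Ef m t / (Bf m t) ^ 2 * (Real.log t - Real.log (rr m t - ((m:ℝ)+1)))) t := by
  have hB := Bf_pos m ht
  have hφ : 0 < rr m t - ((m:ℝ)+1) := by
    have := rr_gt m ht; linarith
  have hrr := hasDerivAt_rr m ht
  have h1 : HasDerivAt (fun s => rr m s * Real.log s)
      (Ef m t / (Bf m t) ^ 2 * Real.log t + rr m t * t⁻¹) t :=
    hrr.mul (Real.hasDerivAt_log (ne_of_gt ht))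
  have h2 : HasDerivAt (fun s => Real.log (Bf m s)) (Af m t / Bf m t) t :=
    (hasDerivAt_Bf m t).log (ne_of_gt hB)
  have h3 : HasDerivAt (fun s => rr m s - ((m:ℝ)+1)) (Ef m t / (Bf m t) ^ 2) t :=
    hrr.sub_const _
  have h4 : HasDerivAt (fun s => 1 - Real.log (rr m s - ((m:ℝ)+1)))
      (-(Ef m t / (Bf m t) ^ 2 / (rr m t - ((m:ℝ)+1)))) t :=
    (h3.log (ne_of_gt hφ)).const_sub 1
  have h5 := h3.mul h4
  have h6 := (h1.sub h2).add h5
  have hHf : Hf m = fun s => rr m s * Real.log s - Real.log (Bf m s)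
      + (rr m s - ((m:ℝ)+1)) * (1 - Real.log (rr m s - ((m:ℝ)+1))) := rfl
  rw [hHf]
  convert! h6 using 1
  have hsimp : rr m t * t⁻¹ = Af m t / Bf m t := by
    rw [rr]
    field_simp
  have hφc : (rr m t - ((m:ℝ)+1)) * -(Ef m t / Bf m t ^ 2 / (rr m t - ((m:ℝ)+1)))
      = -(Ef m t / Bf m t ^ 2) := by
    field_simp
  rw [hsimp, hφc]
  ring

lemma Hf_mono (m : ℕ) : StrictMonoOn (Hf m) (Set.Ioi 0) := by
  apply strictMonoOn_of_deriv_pos (convex_Ioi 0)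
  · intro x hx
    exact (hasDerivAt_Hf m hx).continuousAt.continuousWithinAt
  · intro x hx
    rw [interior_Ioi] at hx
    rw [(hasDerivAt_Hf m hx).deriv]
    have h1 := Ef_pos m hx
    have h2 := Bf_pos m hx
    have hφ : 0 < rr m x - ((m:ℝ)+1) := by
      have := rr_gt m hx; linarith
    have hφ2 : rr m x - ((m:ℝ)+1) < x := by
      have := rr_lt m hx; linarith
    have hlog : Real.log (rr m x - ((m:ℝ)+1)) < Real.log x :=
      Real.log_lt_log hφ hφ2
    have : 0 < Ef m x / (Bf m x) ^ 2 := by positivity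
    nlinarith

lemma rr_of_heq (m : ℕ) {μ ρ : ℝ} (hμ : 0 < μ)
    (heq : μ * fpois m μ / fpois (m+1) μ = ρ) : rr m μ = ρ := by
  rw [← heq, rr]
  rw [fpois_eq m μ hμ, fpois_eq (m+1) μ hμ]
  have hB := Bf_pos m hμ
  have hBf : Real.exp μ - Spar (m+1) μ = Bf m μ := rfl
  have hAf : Real.exp μ - Spar m μ = Af m μ := rfl
  rw [hBf, hAf]
  have hexp : Real.exp (-μ) ≠ 0 := Real.exp_ne_zero _
  field_simp

lemma side_eq (m : ℕ) {μ ρ : ℝ} (hμ : 0 < μ) (hρ : rr m μ = ρ) :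
    μ ^ ρ * Real.exp (-μ) / fpois (m+1) μ * (Real.exp 1 / (ρ - ((m:ℝ)+1))) ^ (ρ - ((m:ℝ)+1))
      = Real.exp (Hf m μ) := by
  have hB := Bf_pos m hμ
  have hφ : 0 < ρ - ((m:ℝ)+1) := by
    have := rr_gt m hμ; rw [hρ] at this; linarith
  have hbase : 0 < Real.exp 1 / (ρ - ((m:ℝ)+1)) := by positivity
  rw [fpois_eq (m+1) μ hμ]
  have hBf : Real.exp μ - Spar (m+1) μ = Bf m μ := rfl
  rw [hBf]
  rw [Real.rpow_def_of_pos hμ, Real.rpow_def_of_pos hbase]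
  have hlogbase : Real.log (Real.exp 1 / (ρ - ((m:ℝ)+1))) = 1 - Real.log (ρ - ((m:ℝ)+1)) := by
    rw [Real.log_div (Real.exp_ne_zero 1) (ne_of_gt hφ), Real.log_exp]
  rw [hlogbase]
  have hHval : Hf m μ = Real.log μ * ρ + (-Real.log (Bf m μ)) + (1 - Real.log (ρ - ((m:ℝ)+1))) * (ρ - ((m:ℝ)+1)) := by
    rw [Hf, hρ]
    ring
  rw [hHval, Real.exp_add, Real.exp_add, Real.exp_neg (Real.log (Bf m μ)), Real.exp_log hB]
  have hexp : Real.exp (-μ) ≠ 0 := Real.exp_ne_zero _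
  field_simp

theorem stmt14 (k : ℕ) (hk : 1 ≤ k) (ρ₁ ρ₂ : ℝ) (hρ₁ : (k : ℝ) < ρ₁) (hρ₁₂ : ρ₁ < ρ₂)
    (μ₁ μ₂ : ℝ) (hμ₁ : 0 < μ₁) (hμ₂ : 0 < μ₂)
    (heq₁ : μ₁ * fpois (k - 1) μ₁ / fpois k μ₁ = ρ₁)
    (heq₂ : μ₂ * fpois (k - 1) μ₂ / fpois k μ₂ = ρ₂) :
    μ₁ ^ ρ₁ * Real.exp (-μ₁) / fpois k μ₁ * (Real.exp 1 / (ρ₁ - k)) ^ (ρ₁ - k) <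
    μ₂ ^ ρ₂ * Real.exp (-μ₂) / fpois k μ₂ * (Real.exp 1 / (ρ₂ - k)) ^ (ρ₂ - k) := by
  obtain ⟨m, rfl⟩ : ∃ m, k = m + 1 := ⟨k - 1, by omega⟩
  have hm1 : m + 1 - 1 = m := by omega
  rw [hm1] at heq₁ heq₂
  have hr₁ : rr m μ₁ = ρ₁ := rr_of_heq m hμ₁ heq₁
  have hr₂ : rr m μ₂ = ρ₂ := rr_of_heq m hμ₂ heq₂
  have hcast : ((m + 1 : ℕ) : ℝ) = (m:ℝ) + 1 := by push_cast; ring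
  have hμ₁₂ : μ₁ < μ₂ := by
    have := (rr_mono m).lt_iff_lt (Set.mem_Ioi.mpr hμ₁) (Set.mem_Ioi.mpr hμ₂)
    apply this.mp
    rw [hr₁, hr₂]
    exact hρ₁₂
  have hH := Hf_mono m (Set.mem_Ioi.mpr hμ₁) (Set.mem_Ioi.mpr hμ₂) hμ₁₂
  have hs₁ := side_eq m hμ₁ hr₁
  have hs₂ := side_eq m hμ₂ hr₂
  rw [hcast, hs₁, hs₂]
  exact Real.exp_lt_exp.mpr hH
end

section
/- Let k ≥ 1 be an integer and let G be a finite simple graph. Let B be the set of vertices v of G such that v has degree at least k+1 in G and every neighbour of v has degree exactly k in G. Then every k-regular subgraph H of G satisfies |V(G)| − |V(H)| ≥ |B|/k; in particular, H omits at least one neighbour of each vertex of B, and each vertex of G is a neighbour of at most k vertices of B among those forced to be omitted. -/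
theorem stmt17 {V : Type*} [Fintype V] (k : ℕ) (hk : 1 ≤ k) (G : SimpleGraph V)
    (H : G.Subgraph) (hreg : ∀ v ∈ H.verts, (H.neighborSet v).ncard = k) :
    (({v : V | k + 1 ≤ (G.neighborSet v).ncard ∧
        ∀ u, G.Adj v u → (G.neighborSet u).ncard = k}.ncard : ℝ)) / k ≤
      (Fintype.card V : ℝ) - (H.verts.ncard : ℝ) := by
  classical
  set B := {v : V | k + 1 ≤ (G.neighborSet v).ncard ∧
      ∀ u, G.Adj v u → (G.neighborSet u).ncard = k} with hBdef
  -- Step 1: every vertex of B has a G-neighbour outside H.verts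
  have key : ∀ v ∈ B, ∃ w, G.Adj v w ∧ w ∉ H.verts := by
    intro v hv
    by_contra hcon
    push_neg at hcon
    -- every neighbour of v is in H.verts
    have hnb_eq : ∀ u, G.Adj v u → H.neighborSet u = G.neighborSet u := by
      intro u hu
      refine Set.eq_of_subset_of_ncard_le (H.neighborSet_subset u) ?_ (Set.toFinite _)
      rw [hreg u (hcon u hu), hv.2 u hu]
    have hvadj : ∀ u, G.Adj v u → H.Adj v u := by
      intro u hu
      have : v ∈ H.neighborSet u := by rw [hnb_eq u hu]; exact hu.symm
      exact this.symm
    have hv1 : k + 1 ≤ (G.neighborSet v).ncard := hv.1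
    obtain ⟨u, hu⟩ := (Set.nonempty_of_ncard_ne_zero (by omega) :
      (G.neighborSet v).Nonempty)
    have hvH : v ∈ H.verts := (hvadj u hu).fst_mem
    have hsub : G.neighborSet v ⊆ H.neighborSet v := fun w hw => hvadj w hw
    have := Set.ncard_le_ncard hsub (Set.toFinite _)
    rw [hreg v hvH] at this
    omega
  -- choice function sending each v ∈ B to an omitted neighbour
  set f : V → V := fun v =>
    if h : ∃ w, G.Adj v w ∧ w ∉ H.verts then h.choose else v with hfdef
  have hf : ∀ v ∈ B, G.Adj v (f v) ∧ f v ∉ H.verts := by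
    intro v hv
    have h := key v hv
    simp only [hfdef, dif_pos h]
    exact h.choose_spec
  set s : Finset V := B.toFinset with hsdef
  set t : Finset V := (H.vertsᶜ).toFinset with htdef
  have hmaps : ∀ v ∈ s, f v ∈ t := by
    intro v hv
    rw [hsdef, Set.mem_toFinset] at hv
    rw [htdef, Set.mem_toFinset]
    exact (hf v hv).2
  have hfiber : ∀ a ∈ t, (s.filter fun x => f x = a).card ≤ k := by
    intro a _
    by_cases hne : (s.filter fun x => f x = a).Nonempty
    · obtain ⟨v0, hv0⟩ := hne
      rw [Finset.mem_filter] at hv0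
      have hv0B : v0 ∈ B := by
        have := hv0.1; rw [hsdef, Set.mem_toFinset] at this; exact this
      have hadj : G.Adj v0 a := hv0.2 ▸ (hf v0 hv0B).1
      have hdeg : (G.neighborSet a).ncard = k := hv0B.2 a hadj
      have hsub : (s.filter fun x => f x = a) ⊆ (G.neighborSet a).toFinset := by
        intro x hx
        rw [Finset.mem_filter] at hx
        have hxB : x ∈ B := by
          have := hx.1; rw [hsdef, Set.mem_toFinset] at this; exact this
        have : G.Adj x a := hx.2 ▸ (hf x hxB).1
        rw [Set.mem_toFinset]
        exact this.symm
      calc (s.filter fun x => f x = a).card ≤ (G.neighborSet a).toFinset.card :=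
              Finset.card_le_card hsub
        _ = (G.neighborSet a).ncard := (Set.ncard_eq_toFinset_card' _).symm
        _ = k := hdeg
    · rw [Finset.not_nonempty_iff_eq_empty] at hne
      simp [hne]
  have hcount : s.card ≤ k * t.card :=
    Finset.card_le_mul_card_image_of_maps_to hmaps k hfiber
  have hBcard : B.ncard = s.card := Set.ncard_eq_toFinset_card' _
  have htcard : (H.vertsᶜ).ncard = t.card := Set.ncard_eq_toFinset_card' _
  have hcompl : H.verts.ncard + (H.vertsᶜ).ncard = Fintype.card V := by
    rw [Set.ncard_add_ncard_compl, Nat.card_eq_fintype_card]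
  have h1 : B.ncard ≤ k * (H.vertsᶜ).ncard := by rw [hBcard, htcard]; exact hcount
  rw [div_le_iff₀ (by exact_mod_cast Nat.pos_of_ne_zero (by omega) : (0:ℝ) < k)]
  have h2 : (H.verts.ncard : ℝ) + ((H.vertsᶜ).ncard : ℝ) = Fintype.card V := by
    exact_mod_cast hcompl
  have h1' : (B.ncard : ℝ) ≤ k * ((H.vertsᶜ).ncard : ℝ) := by exact_mod_cast h1
  nlinarith [h1', h2]
end

section
/- For every integer k ≥ 1, the function x ↦ x f_{k−1}(x)/f_k(x) is strictly increasing on (0,∞), and x f_{k−1}(x)/f_k(x) → k as x → 0⁺. -/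
open Filter

set_option maxHeartbeats 1000000

noncomputable def gg (j : ℕ) (x : ℝ) : ℝ :=
  ∑' i : ℕ, if j ≤ i then x ^ i / (Nat.factorial i) else 0

lemma summable_gg (j : ℕ) (x : ℝ) :
    Summable (fun i : ℕ => if j ≤ i then x ^ i / (Nat.factorial i : ℝ) else 0) := by
  have h := (Real.summable_pow_div_factorial x).indicator {i : ℕ | j ≤ i}
  refine h.congr fun i => ?_
  rw [Set.indicator_apply]
  rfl

lemma fpois_eq_s18 (j : ℕ) (x : ℝ) : fpois j x = Real.exp (-x) * gg j x := by
  rw [fpois, gg, ← tsum_mul_left]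
  congr 1
  funext i
  split <;> simp [mul_div_assoc]

lemma gg_lower (j : ℕ) {x : ℝ} (hx : 0 ≤ x) : x ^ j / (Nat.factorial j : ℝ) ≤ gg j x := by
  have h := Summable.le_tsum (summable_gg j x) j (fun i _ => by split <;> positivity)
  simpa [gg] using h

lemma gg_pos (j : ℕ) {x : ℝ} (hx : 0 < x) : 0 < gg j x :=
  lt_of_lt_of_le (by positivity) (gg_lower j hx.le)

lemma tsum_shift (F : ℕ → ℝ) (j : ℕ) :
    ∑' i : ℕ, (if j ≤ i then F (i - j) else 0) = ∑' m : ℕ, F m := by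
  apply tsum_eq_tsum_of_ne_zero_bij (fun m => (m : ℕ) + j)
  · intro a b h
    simpa [Subtype.ext_iff] using Nat.add_right_cancel h
  · intro i hi
    simp only [Function.mem_support, ne_eq, ite_eq_right_iff, not_forall] at hi
    obtain ⟨h1, h2⟩ := hi
    exact ⟨⟨i - j, h2⟩, by simp; omega⟩
  · rintro ⟨m, hm⟩
    simp [Nat.le_add_left]

lemma factorial_le_aux (j i : ℕ) (h : j ≤ i) :
    (Nat.factorial j : ℝ) * Nat.factorial (i - j) ≤ Nat.factorial i := by
  have := Nat.factorial_mul_factorial_dvd_factorial h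
  exact_mod_cast Nat.le_of_dvd (Nat.factorial_pos i) this

lemma gg_upper (j : ℕ) {x : ℝ} (hx : 0 ≤ x) :
    gg j x ≤ x ^ j / (Nat.factorial j : ℝ) * Real.exp x := by
  have hsum2 : Summable (fun i : ℕ =>
      if j ≤ i then x ^ (i - j) / (Nat.factorial (i - j) : ℝ) else 0) := by
    rw [← (add_left_injective j).summable_iff (f := fun i : ℕ =>
      if j ≤ i then x ^ (i - j) / (Nat.factorial (i - j) : ℝ) else 0)]
    · exact (Real.summable_pow_div_factorial x).congr (by intro m; simp [Nat.le_add_left])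
    · intro i hi
      simp only [Set.mem_range, not_exists] at hi
      have : ¬ j ≤ i := by
        intro h; exact hi (i - j) (by omega)
      simp [this]
  have key : ∀ i : ℕ, (if j ≤ i then x ^ i / (Nat.factorial i : ℝ) else 0) ≤
      x ^ j / (Nat.factorial j : ℝ) *
        (if j ≤ i then x ^ (i - j) / (Nat.factorial (i - j) : ℝ) else 0) := by
    intro i
    split
    · rename_i h
      rw [show x ^ i = x ^ j * x ^ (i - j) by rw [← pow_add]; congr 1; omega]
      rw [div_mul_div_comm]
      apply div_le_div_of_nonneg_left (by positivity) (by positivity)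
      exact factorial_le_aux j i h
    · simp
  calc gg j x ≤ ∑' i : ℕ, x ^ j / (Nat.factorial j : ℝ) *
        (if j ≤ i then x ^ (i - j) / (Nat.factorial (i - j) : ℝ) else 0) :=
        Summable.tsum_le_tsum key (summable_gg j x) (hsum2.mul_left _)
    _ = x ^ j / (Nat.factorial j : ℝ) * Real.exp x := by
        rw [tsum_mul_left, tsum_shift (fun m => x ^ m / (Nat.factorial m : ℝ)) j]
        congr 1
        rw [Real.exp_eq_exp_ℝ, NormedSpace.exp_eq_tsum_div]

lemma x_mul_gg (j : ℕ) (x : ℝ) :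
    x * gg j x = ∑' i : ℕ,
      (i : ℝ) * (if j + 1 ≤ i then x ^ i / (Nat.factorial i : ℝ) else 0) := by
  rw [gg, ← tsum_mul_left]
  symm
  apply tsum_eq_tsum_of_ne_zero_bij (fun m => (m : ℕ) + 1)
  · intro a b h
    simpa [Subtype.ext_iff] using Nat.add_right_cancel h
  · intro i hi
    simp only [Function.mem_support, ne_eq, mul_eq_zero, not_or] at hi
    obtain ⟨h1, h2⟩ := hi
    have hji : j + 1 ≤ i := by
      by_contra h
      simp [h] at h2
    have hxne : x ≠ 0 := by
      intro h
      apply h2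
      rw [if_pos hji, h, zero_pow (by omega : i ≠ 0), zero_div]
    refine ⟨⟨i - 1, ?_⟩, by simp; omega⟩
    simp only [Function.mem_support, ne_eq, mul_eq_zero, not_or]
    refine ⟨hxne, ?_⟩
    rw [if_pos (by omega : j ≤ i - 1)]
    positivity
  · rintro ⟨m, hm⟩
    simp only [Function.mem_support, ne_eq, mul_eq_zero, not_or] at hm
    obtain ⟨hxne, h2⟩ := hm
    have hjm : j ≤ m := by
      by_contra h
      simp [h] at h2
    simp only [if_pos hjm, if_pos (by omega : j + 1 ≤ m + 1)]
    push_cast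
    rw [Nat.factorial_succ]
    push_cast
    have : (m : ℝ) + 1 ≠ 0 := by positivity
    field_simp
    ring

lemma summable_mul_gg (j : ℕ) (x : ℝ) :
    Summable (fun i : ℕ =>
      (i : ℝ) * (if j ≤ i then x ^ i / (Nat.factorial i : ℝ) else 0)) := by
  have h0 : Summable (fun i : ℕ => (i : ℝ) * (x ^ i / (Nat.factorial i : ℝ))) := by
    rw [← summable_nat_add_iff 1]
    refine ((Real.summable_pow_div_factorial x).mul_left x).congr fun i => ?_
    push_cast
    rw [Nat.factorial_succ]
    push_cast
    have : (i : ℝ) + 1 ≠ 0 := by positivity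
    field_simp
    ring
  have h := h0.indicator {i : ℕ | j ≤ i}
  refine h.congr fun i => ?_
  rw [Set.indicator_apply]
  by_cases hji : j ≤ i
  · simp [hji, Set.mem_setOf_eq]
  · simp [hji, Set.mem_setOf_eq]

lemma gg_nonneg_term (j : ℕ) {x : ℝ} (hx : 0 ≤ x) (i : ℕ) :
    0 ≤ (if j ≤ i then x ^ i / (Nat.factorial i : ℝ) else 0) := by
  split <;> positivity

lemma cross (j : ℕ) {x y : ℝ} (hx : 0 < x) (hxy : x < y) :
    x * gg j x * gg (j + 1) y < y * gg j y * gg (j + 1) x := by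
  have hy : 0 < y := hx.trans hxy
  obtain ⟨A, hAdef⟩ : ∃ A : ℕ → ℝ,
      A = fun i => if j + 1 ≤ i then x ^ i / (Nat.factorial i : ℝ) else 0 := ⟨_, rfl⟩
  obtain ⟨B, hBdef⟩ : ∃ B : ℕ → ℝ,
      B = fun i => if j + 1 ≤ i then y ^ i / (Nat.factorial i : ℝ) else 0 := ⟨_, rfl⟩
  have hA : Summable A := hAdef ▸ summable_gg (j + 1) x
  have hB : Summable B := hBdef ▸ summable_gg (j + 1) y
  have hA' : Summable (fun i : ℕ => (i : ℝ) * A i) := hAdef ▸ summable_mul_gg (j + 1) x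
  have hB' : Summable (fun i : ℕ => (i : ℝ) * B i) := hBdef ▸ summable_mul_gg (j + 1) y
  have hAnn : ∀ i, 0 ≤ A i := hAdef ▸ gg_nonneg_term (j + 1) hx.le
  have hBnn : ∀ i, 0 ≤ B i := hBdef ▸ gg_nonneg_term (j + 1) hy.le
  have hA'nn : ∀ i : ℕ, 0 ≤ (i : ℝ) * A i := fun i => mul_nonneg (by positivity) (hAnn i)
  have hB'nn : ∀ i : ℕ, 0 ≤ (i : ℝ) * B i := fun i => mul_nonneg (by positivity) (hBnn i)
  have nA : Summable (fun i : ℕ => ‖A i‖) :=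
    hA.congr fun i => (Real.norm_of_nonneg (hAnn i)).symm
  have nB : Summable (fun i : ℕ => ‖B i‖) :=
    hB.congr fun i => (Real.norm_of_nonneg (hBnn i)).symm
  have nA' : Summable (fun i : ℕ => ‖(i : ℝ) * A i‖) :=
    hA'.congr fun i => (Real.norm_of_nonneg (hA'nn i)).symm
  have nB' : Summable (fun i : ℕ => ‖(i : ℝ) * B i‖) :=
    hB'.congr fun i => (Real.norm_of_nonneg (hB'nn i)).symm
  have hP1 : (∑' i : ℕ, (i : ℝ) * A i) * (∑' i : ℕ, B i)
      = ∑' p : ℕ × ℕ, ((p.1 : ℝ) * A p.1) * B p.2 := tsum_mul_tsum_of_summable_norm nA' nB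
  have hP2 : (∑' i : ℕ, (i : ℝ) * B i) * (∑' i : ℕ, A i)
      = ∑' p : ℕ × ℕ, ((p.1 : ℝ) * B p.1) * A p.2 := tsum_mul_tsum_of_summable_norm nB' nA
  have hS1 : Summable (fun p : ℕ × ℕ => ((p.1 : ℝ) * A p.1) * B p.2) :=
    summable_mul_of_summable_norm nA' nB
  have hS2 : Summable (fun p : ℕ × ℕ => ((p.1 : ℝ) * B p.1) * A p.2) :=
    summable_mul_of_summable_norm nB' nA
  obtain ⟨D, hDdef⟩ : ∃ D : ℕ × ℕ → ℝ,
      D = fun p => ((p.1 : ℝ) * B p.1) * A p.2 - ((p.1 : ℝ) * A p.1) * B p.2 := ⟨_, rfl⟩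
  have hD : Summable D := hDdef ▸ hS2.sub hS1
  have hDswap : Summable (fun p : ℕ × ℕ => D p.swap) := hD.prod_symm
  have htsum_swap : ∑' p : ℕ × ℕ, D p.swap = ∑' p : ℕ × ℕ, D p := by
    rw [← (Equiv.prodComm ℕ ℕ).tsum_eq D]
    rfl
  -- key pointwise inequality
  have key : ∀ i i' : ℕ, i ≤ i' → A i' * B i ≤ A i * B i' := by
    intro i i' hii'
    by_cases hji : j + 1 ≤ i
    · rw [hAdef, hBdef]
      simp only [if_pos hji, if_pos (hji.trans hii')]
      rw [div_mul_div_comm, div_mul_div_comm, mul_comm ((Nat.factorial i' : ℝ))]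
      apply div_le_div_of_nonneg_right ?_ (by positivity)
      · calc x ^ i' * y ^ i = x ^ i * x ^ (i' - i) * y ^ i := by
              rw [← pow_add, Nat.add_sub_cancel' hii']
          _ ≤ x ^ i * y ^ (i' - i) * y ^ i := by
              have h := pow_le_pow_left₀ hx.le hxy.le (i' - i)
              gcongr
          _ = x ^ i * y ^ i' := by
              rw [mul_assoc, ← pow_add, Nat.sub_add_cancel hii']
    · have : A i = 0 := by rw [hAdef]; simp [hji]
      have hBi : B i = 0 := by rw [hBdef]; simp [hji]
      simp [this, hBi]
  have hsymm : ∀ p : ℕ × ℕ, 0 ≤ D p + D p.swap := by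
    have main : ∀ i i' : ℕ, i ≤ i' → 0 ≤ D (i, i') + D (i', i) := by
      intro i i' hii'
      have hident : D (i, i') + D (i', i)
          = ((i : ℝ) - (i' : ℝ)) * (B i * A i' - A i * B i') := by
        rw [hDdef]; ring
      rw [hident]
      have h1 : (i : ℝ) - (i' : ℝ) ≤ 0 := by
        have : (i : ℝ) ≤ (i' : ℝ) := by exact_mod_cast hii'
        linarith
      have h2 : B i * A i' - A i * B i' ≤ 0 := by
        have hc : A i' * B i ≤ A i * B i' := key i i' hii'
        have hcomm : B i * A i' = A i' * B i := mul_comm _ _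
        linarith
      have hm := mul_nonneg (neg_nonneg.2 h1) (neg_nonneg.2 h2)
      rw [neg_mul_neg] at hm
      exact hm
    intro p
    rcases le_total p.1 p.2 with h | h
    · exact main p.1 p.2 h
    · have := main p.2 p.1 h
      rw [Prod.swap]
      linarith [this]
  have hpos : 0 < D (j + 2, j + 1) + D (j + 1, j + 2) := by
    have hident : D (j + 2, j + 1) + D (j + 1, j + 2)
        = B (j + 2) * A (j + 1) - A (j + 2) * B (j + 1) := by
      rw [hDdef]
      push_cast
      ring
    rw [hident, hAdef, hBdef]
    simp only [if_pos (by omega : j + 1 ≤ j + 2), if_pos (le_refl (j + 1))]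
    rw [div_mul_div_comm, div_mul_div_comm, div_sub_div_same]
    apply div_pos ?_ (by positivity)
    have e1 : y ^ (j + 2) = y ^ (j + 1) * y := pow_succ y (j + 1)
    have e2 : x ^ (j + 2) = x ^ (j + 1) * x := pow_succ x (j + 1)
    rw [e1, e2]
    have hgt := mul_pos (mul_pos (pow_pos hx (j + 1)) (pow_pos hy (j + 1))) (sub_pos.2 hxy)
    have hEq : y ^ (j + 1) * y * x ^ (j + 1) - x ^ (j + 1) * x * y ^ (j + 1)
        = x ^ (j + 1) * y ^ (j + 1) * (y - x) := by ring
    linarith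
  have htot : 0 < ∑' p : ℕ × ℕ, (D p + D p.swap) :=
    Summable.tsum_pos (hD.add hDswap) hsymm (j + 2, j + 1) hpos
  have hsplit : ∑' p : ℕ × ℕ, (D p + D p.swap)
      = (∑' p : ℕ × ℕ, D p) + (∑' p : ℕ × ℕ, D p.swap) := Summable.tsum_add hD hDswap
  rw [hsplit, htsum_swap] at htot
  have hDpos : 0 < ∑' p : ℕ × ℕ, D p := by linarith
  have hDsub : ∑' p : ℕ × ℕ, D p
      = (∑' p : ℕ × ℕ, ((p.1 : ℝ) * B p.1) * A p.2)
        - (∑' p : ℕ × ℕ, ((p.1 : ℝ) * A p.1) * B p.2) := by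
    rw [hDdef]
    exact Summable.tsum_sub hS2 hS1
  rw [hDsub] at hDpos
  have hfin : (∑' i : ℕ, (i : ℝ) * A i) * (∑' i : ℕ, B i)
      < (∑' i : ℕ, (i : ℝ) * B i) * (∑' i : ℕ, A i) := by
    rw [hP1, hP2]; linarith
  have e1 : x * gg j x = ∑' i : ℕ, (i : ℝ) * A i := by rw [hAdef]; exact x_mul_gg j x
  have e2 : y * gg j y = ∑' i : ℕ, (i : ℝ) * B i := by rw [hBdef]; exact x_mul_gg j y
  have e3 : gg (j + 1) y = ∑' i : ℕ, B i := by rw [hBdef]; rfl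
  have e4 : gg (j + 1) x = ∑' i : ℕ, A i := by rw [hAdef]; rfl
  rw [e1, e2, e3, e4]
  exact hfin

lemma fn_eq (j : ℕ) (x : ℝ) :
    x * fpois j x / fpois (j + 1) x = x * gg j x / gg (j + 1) x := by
  rw [fpois_eq_s18, fpois_eq_s18,
    show x * (Real.exp (-x) * gg j x) = Real.exp (-x) * (x * gg j x) by ring,
    mul_div_mul_left _ _ (Real.exp_ne_zero _)]

lemma bound_low (j : ℕ) {x : ℝ} (hx : 0 < x) :
    ((j : ℝ) + 1) * Real.exp (-x) ≤ x * gg j x / gg (j + 1) x := by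
  have hden := gg_pos (j + 1) hx
  rw [le_div_iff₀ hden]
  have h1 : gg (j + 1) x ≤ x ^ (j + 1) / (Nat.factorial (j + 1) : ℝ) * Real.exp x :=
    gg_upper (j + 1) hx.le
  have h2 : x ^ j / (Nat.factorial j : ℝ) ≤ gg j x := gg_lower j hx.le
  have hmid : ((j : ℝ) + 1) * Real.exp (-x) * (x ^ (j + 1) / (Nat.factorial (j + 1) : ℝ) * Real.exp x)
      = x * (x ^ j / (Nat.factorial j : ℝ)) := by
    rw [Nat.factorial_succ]
    push_cast
    rw [show Real.exp (-x) = (Real.exp x)⁻¹ by rw [Real.exp_neg]]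
    have hj1 : ((j : ℝ) + 1) ≠ 0 := by positivity
    have hfj : ((Nat.factorial j : ℝ)) ≠ 0 := by positivity
    have hex : Real.exp x ≠ 0 := Real.exp_ne_zero x
    field_simp
    ring
  calc ((j : ℝ) + 1) * Real.exp (-x) * gg (j + 1) x
      ≤ ((j : ℝ) + 1) * Real.exp (-x) * (x ^ (j + 1) / (Nat.factorial (j + 1) : ℝ) * Real.exp x) := by
        apply mul_le_mul_of_nonneg_left h1 (by positivity)
    _ = x * (x ^ j / (Nat.factorial j : ℝ)) := hmid
    _ ≤ x * gg j x := mul_le_mul_of_nonneg_left h2 hx.le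

lemma bound_high (j : ℕ) {x : ℝ} (hx : 0 < x) :
    x * gg j x / gg (j + 1) x ≤ ((j : ℝ) + 1) * Real.exp x := by
  have hden := gg_pos (j + 1) hx
  rw [div_le_iff₀ hden]
  have h1 : x ^ (j + 1) / (Nat.factorial (j + 1) : ℝ) ≤ gg (j + 1) x :=
    gg_lower (j + 1) hx.le
  have h2 : gg j x ≤ x ^ j / (Nat.factorial j : ℝ) * Real.exp x := gg_upper j hx.le
  have hmid : x * (x ^ j / (Nat.factorial j : ℝ) * Real.exp x)
      = ((j : ℝ) + 1) * Real.exp x * (x ^ (j + 1) / (Nat.factorial (j + 1) : ℝ)) := by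
    rw [Nat.factorial_succ]
    push_cast
    have hj1 : ((j : ℝ) + 1) ≠ 0 := by positivity
    have hfj : ((Nat.factorial j : ℝ)) ≠ 0 := by positivity
    rw [pow_succ]
    field_simp
  calc x * gg j x ≤ x * (x ^ j / (Nat.factorial j : ℝ) * Real.exp x) :=
        mul_le_mul_of_nonneg_left h2 hx.le
    _ = ((j : ℝ) + 1) * Real.exp x * (x ^ (j + 1) / (Nat.factorial (j + 1) : ℝ)) := hmid
    _ ≤ ((j : ℝ) + 1) * Real.exp x * gg (j + 1) x := by
        apply mul_le_mul_of_nonneg_left h1 (by positivity)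

theorem stmt18 (k : ℕ) (hk : 1 ≤ k) :
    StrictMonoOn (fun x : ℝ => x * fpois (k - 1) x / fpois k x) (Set.Ioi 0) ∧
    Tendsto (fun x : ℝ => x * fpois (k - 1) x / fpois k x)
      (nhdsWithin 0 (Set.Ioi 0)) (nhds (k : ℝ)) := by
  obtain ⟨j, rfl⟩ : ∃ j : ℕ, k = j + 1 := ⟨k - 1, by omega⟩
  have hsimp : (j + 1 : ℕ) - 1 = j := by omega
  have feq : ∀ x : ℝ, x * fpois (j + 1 - 1) x / fpois (j + 1) x
      = x * gg j x / gg (j + 1) x := by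
    intro x
    rw [hsimp]
    exact fn_eq j x
  constructor
  · intro x hx y hy hxy
    simp only [feq]
    have hgx := gg_pos (j + 1) (Set.mem_Ioi.mp hx)
    have hgy := gg_pos (j + 1) (Set.mem_Ioi.mp hy)
    rw [div_lt_div_iff₀ hgx hgy]
    exact cross j (Set.mem_Ioi.mp hx) hxy
  · have hlim1 : Tendsto (fun x : ℝ => ((j : ℝ) + 1) * Real.exp (-x))
        (nhdsWithin 0 (Set.Ioi 0)) (nhds ((j : ℝ) + 1)) := by
      have : Continuous (fun x : ℝ => ((j : ℝ) + 1) * Real.exp (-x)) := by continuity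
      have h := (this.tendsto 0).mono_left
        (nhdsWithin_le_nhds (s := Set.Ioi (0 : ℝ)))
      simpa using h
    have hlim2 : Tendsto (fun x : ℝ => ((j : ℝ) + 1) * Real.exp x)
        (nhdsWithin 0 (Set.Ioi 0)) (nhds ((j : ℝ) + 1)) := by
      have : Continuous (fun x : ℝ => ((j : ℝ) + 1) * Real.exp x) := by continuity
      have h := (this.tendsto 0).mono_left
        (nhdsWithin_le_nhds (s := Set.Ioi (0 : ℝ)))
      simpa using h
    have this : Tendsto (fun x : ℝ => x * fpois (j + 1 - 1) x / fpois (j + 1) x)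
        (nhdsWithin 0 (Set.Ioi 0)) (nhds ((j : ℝ) + 1)) :=
      tendsto_of_tendsto_of_tendsto_of_le_of_le' hlim1 hlim2
      (eventually_nhdsWithin_of_forall fun x hx => by
        rw [feq x]; exact bound_low j (Set.mem_Ioi.mp hx))
      (eventually_nhdsWithin_of_forall fun x hx => by
        rw [feq x]; exact bound_high j (Set.mem_Ioi.mp hx))
    have hcast : ((j + 1 : ℕ) : ℝ) = (j : ℝ) + 1 := by push_cast; ring
    rw [hcast]
    exact this
end

section
/- The function η ↦ (η−1)^{(η−1)/2} · η^{−η/2} is strictly decreasing on the interval (1, ∞), and its limit as η → 1⁺ equals 1. -/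
open Filter Real

private noncomputable def g19 (x : ℝ) : ℝ := ((x - 1) * Real.log (x - 1) - x * Real.log x) / 2

private lemma f_eq_exp_g19 {x : ℝ} (hx : 1 < x) :
    (x - 1) ^ ((x - 1)/2) * x ^ (-x/2) = Real.exp (g19 x) := by
  have h1 : (0:ℝ) < x - 1 := by linarith
  have h2 : (0:ℝ) < x := by linarith
  rw [Real.rpow_def_of_pos h1, Real.rpow_def_of_pos h2, ← Real.exp_add, g19]
  ring_nf

private lemma hasDerivAt_g19 {x : ℝ} (hx : 1 < x) :
    HasDerivAt g19 ((Real.log (x - 1) - Real.log x) / 2) x := by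
  have h1 : (0:ℝ) < x - 1 := by linarith
  have h2 : (0:ℝ) < x := by linarith
  have d1 : HasDerivAt (fun y : ℝ => (y - 1) * Real.log (y - 1))
      ((Real.log (x - 1) + 1) * 1) x :=
    by have := (Real.hasDerivAt_mul_log h1.ne').comp x ((hasDerivAt_id x).sub_const 1); exact this
  have d2 : HasDerivAt (fun y : ℝ => y * Real.log y) (Real.log x + 1) x :=
    Real.hasDerivAt_mul_log h2.ne'
  have := (d1.sub d2).div_const 2
  refine this.congr_deriv ?_
  ring

private lemma g19_strictAnti : StrictAntiOn g19 (Set.Ioi 1) := by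
  apply strictAntiOn_of_deriv_neg (convex_Ioi 1)
  · intro x hx
    exact (hasDerivAt_g19 hx).continuousAt.continuousWithinAt
  · intro x hx
    rw [interior_Ioi] at hx
    rw [(hasDerivAt_g19 hx).deriv]
    have h1 : (0:ℝ) < x - 1 := by simp at hx; linarith
    have : Real.log (x - 1) < Real.log x := Real.log_lt_log h1 (by linarith)
    linarith

theorem stmt19 :
    StrictAntiOn (fun η : ℝ => (η - 1) ^ ((η - 1)/2) * η ^ (-η/2)) (Set.Ioi 1) ∧
    Tendsto (fun η : ℝ => (η - 1) ^ ((η - 1)/2) * η ^ (-η/2))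
      (nhdsWithin 1 (Set.Ioi 1)) (nhds 1) := by
  constructor
  · intro a ha b hb hab
    show (b - 1) ^ ((b - 1)/2) * b ^ (-b/2) < (a - 1) ^ ((a - 1)/2) * a ^ (-a/2)
    rw [f_eq_exp_g19 ha, f_eq_exp_g19 hb]
    exact Real.exp_lt_exp.2 (g19_strictAnti ha hb hab)
  · have hg : Tendsto g19 (nhdsWithin 1 (Set.Ioi 1)) (nhds 0) := by
      have h1 : Tendsto (fun x : ℝ => (x - 1) * Real.log (x - 1)) (nhds 1) (nhds 0) := by
        have := (Real.continuous_mul_log.tendsto 0).comp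
          (by simpa using (tendsto_id.sub_const 1 : Tendsto (fun x : ℝ => id x - 1) (nhds 1) (nhds (1-1))) : Tendsto (fun x : ℝ => x - 1) (nhds 1) (nhds 0))
        simpa [Function.comp_def] using this
      have h2 : Tendsto (fun x : ℝ => x * Real.log x) (nhds 1) (nhds 0) := by
        have := Real.continuous_mul_log.tendsto 1
        simpa using this
      have := ((h1.sub h2).div_const 2).mono_left (nhdsWithin_le_nhds (s := Set.Ioi 1))
      rw [show g19 = fun a => ((a - 1) * Real.log (a - 1) - a * Real.log a) / 2 from rfl]
      simpa using this
    have : Tendsto (fun x => Real.exp (g19 x)) (nhdsWithin 1 (Set.Ioi 1)) (nhds 1) := by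
      simpa [Function.comp_def] using (Real.continuous_exp.tendsto 0).comp hg
    refine this.congr' ?_
    filter_upwards [self_mem_nhdsWithin] with x hx
    exact (f_eq_exp_g19 hx).symm
end
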